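/- For all sufficiently large m ∈ ℕ: if |z| ≥ exp(log(m)/(2m)), then |F_m(z)| > 1, where F_m(z) = (z^{m+1} - z^{-m-1})/(z^m - z^{-m}). Consequently, if also |w| ≥ exp(log(n)/(2n)) with n large, then |F_m(z)·F_n(w)| > 1. -/

import Mathlib

noncomputable def Fm (m : ℕ) (z : ℂ) : ℂ :=
  (z ^ (m + 1) - z ^ (-(m + 1) : ℤ)) / (z ^ m - z ^ (-(m : ℤ)))

lemma aux_one_lt (m : ℕ) (hm : 60 ≤ m) (r : ℝ)
    (hr : Real.exp (Real.log m / (2 * m)) ≤ r) : 1 < r := by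
  have hm1 : (1:ℝ) < m := by exact_mod_cast lt_of_lt_of_le (by norm_num : (1:ℕ) < 60) hm
  have hc : 0 < Real.log m / (2 * m) := div_pos (Real.log_pos hm1) (by positivity)
  calc (1:ℝ) = Real.exp 0 := Real.exp_zero.symm
    _ < Real.exp (Real.log m / (2 * m)) := Real.exp_lt_exp.2 hc
    _ ≤ r := hr

lemma aux_key (m : ℕ) (hm : 60 ≤ m) (r : ℝ)
    (hr : Real.exp (Real.log m / (2 * m)) ≤ r) :
    r ^ m + (r ^ m)⁻¹ < r ^ (m + 1) - (r ^ (m + 1))⁻¹ := by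
  have hm1 : (1:ℝ) < m := by exact_mod_cast lt_of_lt_of_le (by norm_num : (1:ℕ) < 60) hm
  have hmpos : (0:ℝ) < m := by linarith
  have h60 : (60:ℝ) ≤ m := by exact_mod_cast hm
  have hr1 : 1 < r := aux_one_lt m hm r hr
  have hrpos : 0 < r := by linarith
  -- r^(2m) ≥ m
  have hsm : (m:ℝ) ≤ (r ^ m) ^ 2 := by
    have hexp : Real.exp (Real.log m / (2 * m)) ^ (2 * m) = (m:ℝ) := by
      rw [← Real.exp_nat_mul]
      rw [show ((2 * m : ℕ) : ℝ) * (Real.log m / (2 * m)) = Real.log m by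
        push_cast; field_simp]
      exact Real.exp_log hmpos
    calc (m:ℝ) = Real.exp (Real.log m / (2 * m)) ^ (2 * m) := hexp.symm
      _ ≤ r ^ (2 * m) := pow_le_pow_left₀ (Real.exp_pos _).le hr _
      _ = (r ^ m) ^ 2 := by rw [← pow_mul, mul_comm]
  -- log m > 4
  have hlog : 4 < Real.log m := by
    have hexp4 : Real.exp 4 < 60 := by
      have h1 := Real.exp_one_lt_d9
      have : Real.exp 4 = (Real.exp 1) ^ 4 := by
        rw [← Real.exp_nat_mul]; norm_num
      rw [this]
      calc (Real.exp 1) ^ 4 < 2.7182818286 ^ 4 :=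
            pow_lt_pow_left₀ h1 (Real.exp_pos 1).le (by norm_num)
        _ < 60 := by norm_num
    exact (Real.lt_log_iff_exp_lt hmpos).2 (lt_of_lt_of_le hexp4 h60)
  have hr2 : Real.log m / (2 * m) ≤ r - 1 := by
    have := Real.add_one_le_exp (Real.log m / (2 * m))
    linarith
  have h1 : 2 < (m:ℝ) * (r - 1) := by
    have h3 : Real.log m / 2 ≤ (m:ℝ) * (r - 1) := by
      have := mul_le_mul_of_nonneg_left hr2 hmpos.le
      calc Real.log m / 2 = (m:ℝ) * (Real.log m / (2 * m)) := by field_simp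
        _ ≤ (m:ℝ) * (r - 1) := this
    linarith
  set s := r ^ m with hs
  have hspos : 0 < s := pow_pos hrpos m
  have h2 : r + 1 < s ^ 2 * r * (r - 1) := by
    nlinarith [mul_nonneg (sub_nonneg.2 hsm) (mul_pos hrpos (by linarith : (0:ℝ) < r - 1)).le,
      mul_pos (by linarith : (0:ℝ) < (m:ℝ) * (r - 1) - 2) hrpos]
  have hre : r ^ (m + 1) = s * r := pow_succ r m
  rw [hre, ← mul_lt_mul_iff_of_pos_right (mul_pos hspos hrpos)]
  have e1 : (s + s⁻¹) * (s * r) = s ^ 2 * r + r := by field_simp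
  have e2 : (s * r - (s * r)⁻¹) * (s * r) = s ^ 2 * r ^ 2 - 1 := by field_simp
  rw [e1, e2]
  nlinarith [h2]

lemma Fm_gt (m : ℕ) (hm : 60 ≤ m) (z : ℂ)
    (hz : Real.exp (Real.log m / (2 * m)) ≤ ‖z‖) :
    1 < ‖Fm m z‖ := by
  set r := ‖z‖ with hrdef
  have hkey := aux_key m hm r hz
  have hr1 : 1 < r := aux_one_lt m hm r hz
  have hrm1 : 1 < r ^ m := one_lt_pow₀ hr1 (by omega)
  have hzabs : ∀ k : ℕ, ‖z ^ (-(k:ℤ))‖ = (r ^ k)⁻¹ := by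
    intro k
    rw [norm_zpow, zpow_neg, zpow_natCast]
  have hn1 : ‖z ^ (-(↑m + 1) : ℤ)‖ = (r ^ (m + 1))⁻¹ := by
    rw [show (-(↑m + 1) : ℤ) = -((m + 1 : ℕ) : ℤ) by push_cast; ring]
    exact hzabs (m + 1)
  have hn2 : ‖z ^ (-(m:ℤ))‖ = (r ^ m)⁻¹ := hzabs m
  have hp1 : ‖z ^ (m + 1)‖ = r ^ (m + 1) := by rw [norm_pow]
  have hp2 : ‖z ^ m‖ = r ^ m := by rw [norm_pow]
  have lb : r ^ (m + 1) - (r ^ (m + 1))⁻¹ ≤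
      ‖z ^ (m + 1) - z ^ (-(↑m + 1) : ℤ)‖ := by
    have h := norm_sub_norm_le (z ^ (m + 1)) (z ^ (-(↑m + 1) : ℤ))
    rw [hp1, hn1] at h
    exact h
  have ub : ‖z ^ m - z ^ (-(m:ℤ))‖ ≤ r ^ m + (r ^ m)⁻¹ := by
    have h := norm_sub_le (z ^ m) (z ^ (-(m:ℤ)))
    rw [hp2, hn2] at h
    exact h
  have lbden : r ^ m - (r ^ m)⁻¹ ≤ ‖z ^ m - z ^ (-(m:ℤ))‖ := by
    have h := norm_sub_norm_le (z ^ m) (z ^ (-(m:ℤ)))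
    rw [hp2, hn2] at h
    exact h
  have hinv : (r ^ m)⁻¹ < 1 := inv_lt_one_of_one_lt₀ hrm1
  have hdenpos : 0 < ‖z ^ m - z ^ (-(m:ℤ))‖ := by linarith
  rw [Fm, norm_div, one_lt_div hdenpos]
  linarith

theorem Fm_product_gt_one :
    ∃ M : ℕ, (∀ m : ℕ, M ≤ m → ∀ z : ℂ,
        Real.exp (Real.log m / (2 * m)) ≤ ‖z‖ →
        1 < ‖Fm m z‖) ∧
      (∀ m n : ℕ, M ≤ m → M ≤ n → ∀ z w : ℂ,
        Real.exp (Real.log m / (2 * m)) ≤ ‖z‖ →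
        Real.exp (Real.log n / (2 * n)) ≤ ‖w‖ →
        1 < ‖Fm m z * Fm n w‖) := by
  refine ⟨60, fun m hm z hz => Fm_gt m hm z hz, fun m n hm hn z w hz hw => ?_⟩
  have h1 := Fm_gt m hm z hz
  have h2 := Fm_gt n hn w hw
  rw [norm_mul]
  nlinarith
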